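/- Let F ⊆ F' be fields of characteristic zero, G a group, and V a finite-dimensional representation of G over F. If V is semisimple as an F[G]-module, then V ⊗_F F' is semisimple as an F'[G]-module. -/

import Mathlib

set_option maxHeartbeats 1000000
set_option synthInstance.maxHeartbeats 1000000

theorem aux_isSemisimpleRing_of_atoms {B : Type*} [Ring B] [IsArtinian B B]
    (h : ∀ J : Submodule B B, IsAtom J → ∃ x ∈ J, ∃ y ∈ J, x * y ≠ 0) :
    IsSemisimpleRing B := by
  apply IsSemisimpleModule.of_sSup_simples_eq_top
  set S := sSup {m : Submodule B B | IsSimpleModule B ↥m} with hS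
  have main : ∀ I : Submodule B B, I ≤ S := by
    intro I
    induction I using WellFoundedLT.induction with
    | _ I IH =>
      rcases eq_or_ne I ⊥ with rfl | hne
      · exact bot_le
      obtain ⟨J, hJatom, hJI⟩ := (IsAtomic.eq_bot_or_exists_atom_le I).resolve_left hne
      obtain ⟨x, hx, y, hy, hxy⟩ := h J hJatom
      have hyne : y ≠ 0 := fun hy0 => hxy (by simp [hy0])
      set ra := LinearMap.toSpanSingleton B B y with hra
      have hra_apply : ∀ r : B, ra r = r * y := fun r => smul_eq_mul r y
      have hJa_le : J.map ra ≤ J := by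
        rintro _ ⟨r, hr, rfl⟩
        rw [hra_apply]
        exact J.smul_mem r hy
      have hJa_ne : J.map ra ≠ ⊥ := by
        intro hbot
        have : ra x ∈ J.map ra := Submodule.mem_map_of_mem hx
        rw [hbot, Submodule.mem_bot, hra_apply] at this
        exact hxy this
      have hJa : J.map ra = J := (hJatom.le_iff.mp hJa_le).resolve_left hJa_ne
      obtain ⟨e, he, hey⟩ : ∃ e ∈ J, ra e = y := by
        have : y ∈ J.map ra := hJa.symm ▸ hy
        exact this
      rw [hra_apply] at hey
      have hN : J ⊓ LinearMap.ker ra = ⊥ := by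
        rcases (hJatom.le_iff.mp inf_le_left : _) with h0 | hJN
        · exact h0
        · exfalso
          have hxmem : x ∈ J ⊓ LinearMap.ker ra := by rw [hJN]; exact hx
          have := (Submodule.mem_inf.mp hxmem).2
          rw [LinearMap.mem_ker, hra_apply] at this
          exact hxy this
      have hee : e * e = e := by
        have hmem : e * e - e ∈ J ⊓ LinearMap.ker ra := by
          refine Submodule.mem_inf.mpr ⟨Submodule.sub_mem J (J.smul_mem e he) he, ?_⟩
          rw [LinearMap.mem_ker, map_sub, hra_apply, hra_apply, mul_assoc, hey, hey, sub_self]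
        rw [hN, Submodule.mem_bot, sub_eq_zero] at hmem
        exact hmem
      have hene : e ≠ 0 := by
        intro h0
        rw [h0, zero_mul] at hey
        exact hyne hey.symm
      set re := LinearMap.toSpanSingleton B B e with hre
      have hre_apply : ∀ r : B, re r = r * e := fun r => smul_eq_mul r e
      set I' := I ⊓ LinearMap.ker re with hI'
      have hI'I : I' ≤ I := inf_le_left
      have hI'ne : I' ≠ I := by
        intro heq
        have hemem : e ∈ I' := by rw [heq]; exact hJI he
        have := (Submodule.mem_inf.mp hemem).2
        rw [LinearMap.mem_ker, hre_apply, hee] at this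
        exact hene this
      have hIle : I ≤ J ⊔ I' := by
        intro z hz
        have h1 : z * e ∈ J := J.smul_mem z he
        have h2 : z - z * e ∈ I' := by
          refine Submodule.mem_inf.mpr ⟨Submodule.sub_mem I hz (I.smul_mem z (hJI he)), ?_⟩
          rw [LinearMap.mem_ker, map_sub, hre_apply, hre_apply, mul_assoc, hee, sub_self]
        exact Submodule.mem_sup.mpr ⟨z * e, h1, z - z * e, h2, by abel⟩
      have hJS : J ≤ S := le_sSup (isSimpleModule_iff_isAtom.mpr hJatom)
      exact hIle.trans (sup_le hJS (IH I' (lt_of_le_of_ne hI'I hI'ne)))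
  exact le_antisymm le_top (main ⊤)

theorem aux_ssRing_of_trace {K : Type*} [Field K]
    {M : Type*} [AddCommGroup M] [Module K M] [FiniteDimensional K M]
    (B : Subalgebra K (Module.End K M))
    (hnd : ∀ a : B, (∀ b : B, LinearMap.trace K M ((b : Module.End K M) * a) = 0) → a = 0) :
    IsSemisimpleRing B := by
  haveI : IsArtinian B B := isArtinian_of_tower K inferInstance
  apply aux_isSemisimpleRing_of_atoms
  intro J hJ
  by_contra hcon
  push_neg at hcon
  obtain ⟨a, ha, hane⟩ := Submodule.exists_mem_ne_zero_of_ne_bot hJ.1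
  apply hane
  apply hnd
  intro b
  have hba : b * a ∈ J := by rw [← smul_eq_mul]; exact J.smul_mem b ha
  have hsq : ((b * a) : B) * (b * a) = 0 := by
    rw [mul_assoc b a (b * a), hcon a ha (b * a) hba, mul_zero]
  have hnil : IsNilpotent ((b : Module.End K M) * a) := by
    refine ⟨2, ?_⟩
    have h0 : (((b * a) * (b * a) : B) : Module.End K M) = 0 := by rw [hsq]; rfl
    calc ((b : Module.End K M) * a) ^ 2 = (((b*a) * (b*a) : B) : Module.End K M) := by
          rw [pow_two]; rfl
      _ = 0 := h0
  have := LinearMap.isNilpotent_trace_of_isNilpotent hnil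
  exact this.eq_zero

theorem aux_trace_nondeg {K : Type*} [Field K] [CharZero K]
    {M : Type*} [AddCommGroup M] [Module K M] [FiniteDimensional K M]
    (B : Subalgebra K (Module.End K M)) [IsSemisimpleModule B M] :
    ∀ a : B, (∀ b : B, LinearMap.trace K M ((b : Module.End K M) * a) = 0) → a = 0 := by
  classical
  -- B is a semisimple ring
  set n := Module.finrank K M with hn
  set bV := Module.finBasis K M with hbV
  set f : B →ₗ[B] (Fin n → M) := LinearMap.pi (fun i => LinearMap.toSpanSingleton B M (bV i))
    with hf
  have hinj : Function.Injective f := by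
    intro b c hbc
    have h0 : ∀ i, (b : Module.End K M) (bV i) = (c : Module.End K M) (bV i) := by
      intro i
      have := congrFun hbc i
      exact this
    have : (b : Module.End K M) = c := bV.ext h0
    exact Subtype.ext this
  haveI hpi : IsSemisimpleModule B (Fin n → M) := by
    have hr : ∀ i : Fin n,
        IsSemisimpleModule B (LinearMap.range (LinearMap.single B (fun _ : Fin n => M) i)) :=
      fun i => IsSemisimpleModule.range (LinearMap.single B (fun _ : Fin n => M) i)
    refine isSemisimpleModule_of_isSemisimpleModule_submodule'
      (p := fun i => LinearMap.range (LinearMap.single B (fun _ : Fin n => M) i))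
      hr ?_
    rw [eq_top_iff]
    intro x _
    have hx : x = ∑ i, Pi.single i (x i) := (Finset.univ_sum_single x).symm
    rw [hx]
    refine Submodule.sum_mem _ (fun i _ => Submodule.mem_iSup_of_mem i ⟨x i, rfl⟩)
  haveI hrange : IsSemisimpleModule B ↥(LinearMap.range f) := inferInstance
  haveI hss : IsSemisimpleRing B :=
    IsSemisimpleModule.congr (M := ↥(LinearMap.range f)) (LinearEquiv.ofInjective f hinj)
  -- the kernel ideal of the trace form
  set Kc : Set B := {a : B | ∀ b : B, LinearMap.trace K M ((b : Module.End K M) * a) = 0}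
    with hKc
  have hKmul : ∀ a ∈ Kc, ∀ c : B, a * c ∈ Kc := by
    intro a haK c b
    have h1 : (b : Module.End K M) * ((a : Module.End K M) * c)
        = ((b : Module.End K M) * a) * c := by rw [mul_assoc]
    have h2 : ((a * c : B) : Module.End K M) = (a : Module.End K M) * c := rfl
    rw [h2, h1, LinearMap.trace_mul_comm, ← mul_assoc]
    have h3 : ((c * b : B) : Module.End K M) = (c : Module.End K M) * b := rfl
    rw [← h3]
    exact haK (c * b)
  set Kid : Submodule B B :=
    { carrier := Kc
      add_mem' := by
        intro a a' haK ha'K b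
        have : (b : Module.End K M) * ((a + a' : B) : Module.End K M)
            = (b : Module.End K M) * a + (b : Module.End K M) * a' := by
          push_cast; rw [mul_add]
        rw [this, map_add, haK b, ha'K b, add_zero]
      zero_mem' := by
        intro b
        have : ((0 : B) : Module.End K M) = 0 := rfl
        rw [this, mul_zero, map_zero]
      smul_mem' := by
        intro c a haK b
        have h2 : ((c • a : B) : Module.End K M) = (c : Module.End K M) * a := rfl
        have h1 : (b : Module.End K M) * ((c : Module.End K M) * a)
            = ((b * c : B) : Module.End K M) * a := by push_cast; rw [mul_assoc]
        rw [h2, h1]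
        exact haK (b * c) } with hKid
  obtain ⟨C, hC⟩ := exists_isCompl Kid
  obtain ⟨e, heK, fe, hfC, hef⟩ : ∃ e ∈ Kid, ∃ fe ∈ C, e + fe = 1 := by
    have h1 : (1 : B) ∈ Kid ⊔ C := by rw [hC.sup_eq_top]; trivial
    obtain ⟨e, he, fe, hfe, h⟩ := Submodule.mem_sup.mp h1
    exact ⟨e, he, fe, hfe, h⟩
  have key : ∀ a ∈ Kid, a = a * e := by
    intro a haK
    have hsum : a * e + a * fe = a := by rw [← mul_add, hef, mul_one]
    have h1 : a * fe ∈ Kid := by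
      have hrw : a * fe = a - a * e := eq_sub_of_add_eq' hsum
      rw [hrw]
      exact Submodule.sub_mem _ haK (hKmul a haK e)
    have h2 : a * fe ∈ C := by rw [← smul_eq_mul]; exact C.smul_mem a hfC
    have h3 : a * fe = 0 := by
      have h4 : a * fe ∈ Kid ⊓ C := Submodule.mem_inf.mpr ⟨h1, h2⟩
      simpa using hC.disjoint.le_bot h4
    rw [h3, add_zero] at hsum
    exact hsum.symm
  have hee : e * e = e := (key e heK).symm
  have htre : LinearMap.trace K M (e : Module.End K M) = 0 := by
    have := heK (1 : B)
    have h1 : ((1 : B) : Module.End K M) = 1 := rfl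
    rwa [h1, one_mul] at this
  have heproj : ∃ p : Submodule K M, LinearMap.IsProj p (e : Module.End K M) := by
    rw [LinearMap.isProj_iff_isIdempotentElem]
    have : ((e * e : B) : Module.End K M) = (e : Module.End K M) * e := rfl
    rw [IsIdempotentElem, ← this, hee]
  obtain ⟨p, hp⟩ := heproj
  have htr := hp.trace
  rw [htre] at htr
  have hp0 : p = ⊥ := by
    rw [← Submodule.finrank_eq_zero (S := p)]
    exact_mod_cast htr.symm
  have he0 : e = 0 := by
    have : (e : Module.End K M) = 0 := by
      ext x
      have := hp.map_mem x
      rw [hp0, Submodule.mem_bot] at this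
      simpa using this
    exact Subtype.ext this
  intro a haK
  have := key a haK
  rw [he0, mul_zero] at this
  exact this
open scoped TensorProduct

set_option maxHeartbeats 4000000
set_option synthInstance.maxHeartbeats 1000000

/-- In characteristic zero, semisimplicity of a finite-dimensional
representation is preserved under extension of scalars: if every invariant
subspace of `V` has an invariant complement, the same holds for the induced
representation of `G` on `F' ⊗_F V`. -/
theorem semisimple_of_extension_of_scalars
    {F F' : Type*} [Field F] [Field F'] [Algebra F F'] [CharZero F] [CharZero F']
    {G : Type*} [Group G] {V : Type*} [AddCommGroup V] [Module F V]
    [FiniteDimensional F V] (ρ : Representation F G V)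
    (hss : ∀ W : Submodule F V, (∀ g : G, W.map (ρ g) ≤ W) →
      ∃ W' : Submodule F V, (∀ g : G, W'.map (ρ g) ≤ W') ∧ IsCompl W W') :
    ∀ W : Submodule F' (F' ⊗[F] V), (∀ g : G, W.map ((ρ g).baseChange F') ≤ W) →
      ∃ W' : Submodule F' (F' ⊗[F] V),
        (∀ g : G, W'.map ((ρ g).baseChange F') ≤ W') ∧ IsCompl W W' := by
  classical
  intro W hW
  -- the F-algebra generated by the image of ρ
  set A : Subalgebra F (Module.End F V) :=
    Algebra.adjoin F (Set.range fun g : G => (ρ g : Module.End F V)) with hA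
  have hgen : ∀ g : G, (ρ g : Module.End F V) ∈ A :=
    fun g => Algebra.subset_adjoin ⟨g, rfl⟩
  -- V is a semisimple A-module
  haveI hssV : IsSemisimpleModule A V := by
    refine { exists_isCompl := fun p => ?_ }
    set p0 := p.restrictScalars F with hp0
    have hp0inv : ∀ g : G, p0.map (ρ g) ≤ p0 := by
      intro g
      rintro _ ⟨x, hx, rfl⟩
      exact p.smul_mem (⟨ρ g, hgen g⟩ : A) hx
    obtain ⟨W0, hW0inv, hW0compl⟩ := hss p0 hp0inv
    have hW0closed : ∀ (f : Module.End F V), f ∈ A → ∀ w ∈ W0, f w ∈ W0 := by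
      intro f hf
      induction hf using Algebra.adjoin_induction with
      | mem x hx =>
        obtain ⟨g, rfl⟩ := hx
        exact fun w hw => hW0inv g ⟨w, hw, rfl⟩
      | algebraMap r =>
        intro w hw
        rw [Module.algebraMap_end_apply]
        exact W0.smul_mem r hw
      | add x y hx hy ihx ihy =>
        intro w hw
        rw [LinearMap.add_apply]
        exact W0.add_mem (ihx w hw) (ihy w hw)
      | mul x y hx hy ihx ihy =>
        intro w hw
        rw [Module.End.mul_apply]
        exact ihx _ (ihy w hw)
    set q : Submodule A V :=
      { carrier := W0
        add_mem' := fun h1 h2 => W0.add_mem h1 h2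
        zero_mem' := W0.zero_mem
        smul_mem' := fun b x hx => hW0closed (b : Module.End F V) b.2 x hx } with hq
    refine ⟨q, ?_, ?_⟩
    · rw [Submodule.disjoint_def]
      intro x hxp hxq
      exact (Submodule.disjoint_def.mp hW0compl.disjoint) x hxp hxq
    · rw [codisjoint_iff, eq_top_iff]
      intro x _
      have hx : x ∈ p0 ⊔ W0 := by rw [hW0compl.sup_eq_top]; trivial
      obtain ⟨y, hy, z, hz, rfl⟩ := Submodule.mem_sup.mp hx
      exact Submodule.add_mem_sup hy hz
  -- trace-form nondegeneracy over F
  have hndF : ∀ a : A, (∀ b : A, LinearMap.trace F V ((b : Module.End F V) * a) = 0) → a = 0 :=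
    aux_trace_nondeg A
  -- the F'-algebra generated by the base-changed image of ρ
  set B : Subalgebra F' (Module.End F' (F' ⊗[F] V)) :=
    Algebra.adjoin F' (Set.range fun g : G =>
      ((ρ g).baseChange F' : Module.End F' (F' ⊗[F] V))) with hB
  have hgenB : ∀ g : G, ((ρ g).baseChange F' : Module.End F' (F' ⊗[F] V)) ∈ B :=
    fun g => Algebra.subset_adjoin ⟨g, rfl⟩
  have hbsmul : ∀ (r : F) (f : Module.End F V),
      LinearMap.baseChange F' (r • f) = r • LinearMap.baseChange F' f :=
    fun r f => map_smul (LinearMap.baseChangeHom F F' V V) r f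
  have hbadd : ∀ (f g : Module.End F V),
      LinearMap.baseChange F' (f + g) = LinearMap.baseChange F' f + LinearMap.baseChange F' g :=
    fun f g => map_add (LinearMap.baseChangeHom F F' V V) f g
  have hbmul : ∀ (f g : Module.End F V),
      LinearMap.baseChange F' (f * g)
        = LinearMap.baseChange F' f * LinearMap.baseChange F' g := by
    intro f g
    rw [Module.End.mul_eq_comp, Module.End.mul_eq_comp, LinearMap.baseChange_comp]
  have hbone : LinearMap.baseChange F' (1 : Module.End F V)
      = (1 : Module.End F' (F' ⊗[F] V)) := LinearMap.baseChange_id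
  have hmemB : ∀ a : Module.End F V, a ∈ A → a.baseChange F' ∈ B := by
    intro a ha
    induction ha using Algebra.adjoin_induction with
    | mem x hx =>
      obtain ⟨g, rfl⟩ := hx
      exact hgenB g
    | algebraMap r =>
      have h1 : algebraMap F (Module.End F V) r = r • (1 : Module.End F V) :=
        Algebra.algebraMap_eq_smul_one r
      rw [h1, hbsmul, hbone]
      have h2 : r • (1 : Module.End F' (F' ⊗[F] V))
          = (algebraMap F F' r) • (1 : Module.End F' (F' ⊗[F] V)) :=
        (algebraMap_smul F' r _).symm
      rw [h2]
      exact B.smul_mem B.one_mem _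
    | add x y hx hy ihx ihy =>
      rw [hbadd]
      exact B.add_mem ihx ihy
    | mul x y hx hy ihx ihy =>
      rw [hbmul]
      exact B.mul_mem ihx ihy
  -- a basis of A, base-changed, spans B over F'
  set m := Module.finrank F A with hm
  set bA : Module.Basis (Fin m) F A := Module.finBasis F A with hbA
  set w : Fin m → Module.End F' (F' ⊗[F] V) :=
    fun j => ((bA j : Module.End F V)).baseChange F' with hw
  set T : Submodule F' (Module.End F' (F' ⊗[F] V)) := Submodule.span F' (Set.range w) with hT
  have hstep1 : ∀ a : Module.End F V, a ∈ A → a.baseChange F' ∈ T := by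
    intro a ha
    have hrepr : (⟨a, ha⟩ : A) = ∑ j, (bA.repr ⟨a, ha⟩) j • bA j := (bA.sum_repr ⟨a, ha⟩).symm
    have hcoe : a = ∑ j, (bA.repr ⟨a, ha⟩) j • (bA j : Module.End F V) := by
      have := congrArg (Subtype.val) hrepr
      push_cast at this
      exact this
    have hsum : LinearMap.baseChange F' (∑ j, (bA.repr ⟨a, ha⟩) j • (bA j : Module.End F V))
        = ∑ j, LinearMap.baseChange F' ((bA.repr ⟨a, ha⟩) j • (bA j : Module.End F V)) :=
      map_sum (LinearMap.baseChangeHom F F' V V) _ _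
    rw [hcoe, hsum]
    refine Submodule.sum_mem _ (fun j _ => ?_)
    have h1 : LinearMap.baseChange F' ((bA.repr ⟨a, ha⟩) j • (bA j : Module.End F V))
        = (bA.repr ⟨a, ha⟩) j • w j := hbsmul _ _
    have h2 : (bA.repr ⟨a, ha⟩) j • w j
        = (algebraMap F F' ((bA.repr ⟨a, ha⟩) j)) • w j := (algebraMap_smul F' _ _).symm
    show LinearMap.baseChange F' ((bA.repr ⟨a, ha⟩) j • (bA j : Module.End F V)) ∈ T
    rw [h1, h2]
    exact T.smul_mem _ (Submodule.subset_span ⟨j, rfl⟩)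
  have hTmul : ∀ x ∈ T, ∀ y ∈ T, x * y ∈ T := by
    intro x hx
    induction hx using Submodule.span_induction with
    | mem x hxr =>
      intro y hy
      induction hy using Submodule.span_induction with
      | mem y hyr =>
        obtain ⟨i, rfl⟩ := hxr
        obtain ⟨j, rfl⟩ := hyr
        have : w i * w j = ((bA i : Module.End F V) * (bA j : Module.End F V)).baseChange F' :=
          (hbmul _ _).symm
        rw [this]
        exact hstep1 _ (A.mul_mem (bA i).2 (bA j).2)
      | zero => rw [mul_zero]; exact T.zero_mem
      | add y z hy hz ihy ihz => rw [mul_add]; exact T.add_mem ihy ihz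
      | smul c y hy ihy => rw [mul_smul_comm]; exact T.smul_mem c ihy
    | zero => intro y hy; rw [zero_mul]; exact T.zero_mem
    | add x z hx hz ihx ihz => intro y hy; rw [add_mul]; exact T.add_mem (ihx y hy) (ihz y hy)
    | smul c x hx ihx => intro y hy; rw [smul_mul_assoc]; exact T.smul_mem c (ihx y hy)
  have hspan : ∀ x : Module.End F' (F' ⊗[F] V), x ∈ B → x ∈ T := by
    intro x hx
    induction hx using Algebra.adjoin_induction with
    | mem x hxr =>
      obtain ⟨g, rfl⟩ := hxr
      exact hstep1 _ (hgen g)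
    | algebraMap r =>
      have h1 : algebraMap F' (Module.End F' (F' ⊗[F] V)) r
          = r • (1 : Module.End F' (F' ⊗[F] V)) := Algebra.algebraMap_eq_smul_one r
      rw [h1, ← hbone]
      exact T.smul_mem r (hstep1 _ A.one_mem)
    | add x y hx hy ihx ihy => exact T.add_mem ihx ihy
    | mul x y hx hy ihx ihy => exact hTmul x ihx y ihy
  -- the Gram matrix of the trace form
  set t : Matrix (Fin m) (Fin m) F :=
    fun i j => LinearMap.trace F V ((bA i : Module.End F V) * (bA j : Module.End F V)) with ht
  have hdet : t.det ≠ 0 := by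
    intro h0
    obtain ⟨v, hv, hmv⟩ := Matrix.exists_mulVec_eq_zero_iff.mpr h0
    set aa : A := ∑ j, v j • bA j with haa
    have hbase : ∀ i, LinearMap.trace F V ((bA i : Module.End F V) * aa) = 0 := by
      intro i
      have hcoe : (aa : Module.End F V) = ∑ j, v j • (bA j : Module.End F V) := by
        rw [haa]; push_cast; rfl
      rw [hcoe, Finset.mul_sum]
      rw [map_sum]
      have : ∀ j, LinearMap.trace F V ((bA i : Module.End F V) * (v j • (bA j : Module.End F V)))
          = t i j * v j := by
        intro j
        rw [mul_smul_comm, map_smul, ht, smul_eq_mul, mul_comm]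
      rw [Finset.sum_congr rfl (fun j _ => this j)]
      have := congrFun hmv i
      simpa [Matrix.mulVec, dotProduct] using this
    have hall : ∀ b : A, LinearMap.trace F V ((b : Module.End F V) * aa) = 0 := by
      intro b
      have hcoe : (b : Module.End F V) = ∑ i, (bA.repr b) i • (bA i : Module.End F V) := by
        have := congrArg Subtype.val (bA.sum_repr b).symm
        push_cast at this
        exact this
      rw [hcoe, Finset.sum_mul, map_sum]
      refine Finset.sum_eq_zero (fun i _ => ?_)
      rw [smul_mul_assoc, map_smul, hbase i, smul_zero]
    have haa0 : aa = 0 := hndF aa hall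
    refine hv ?_
    funext j
    exact Fintype.linearIndependent_iff.mp bA.linearIndependent v haa0 j
  -- trace-form nondegeneracy over F'
  have hndF' : ∀ a : B, (∀ b : B,
      LinearMap.trace F' (F' ⊗[F] V) ((b : Module.End F' (F' ⊗[F] V)) * a) = 0) → a = 0 := by
    intro a ha
    obtain ⟨c, hc⟩ := (Submodule.mem_span_range_iff_exists_fun F').mp (hspan (a : Module.End F' (F' ⊗[F] V)) a.2)
    have htr : ∀ i j, LinearMap.trace F' (F' ⊗[F] V) (w i * w j) = algebraMap F F' (t i j) := by
      intro i j
      have h1 : w i * w j = ((bA i : Module.End F V) * (bA j : Module.End F V)).baseChange F' :=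
        (hbmul _ _).symm
      rw [h1, LinearMap.trace_baseChange]
    have hcv : (t.map (algebraMap F F')).mulVec c = 0 := by
      funext i
      have h0 := ha ⟨w i, hmemB _ (bA i).2⟩
      have h1 : (a : Module.End F' (F' ⊗[F] V)) = ∑ j, c j • w j := hc.symm
      rw [h1, Finset.mul_sum, map_sum] at h0
      have h2 : ∀ j, LinearMap.trace F' (F' ⊗[F] V) (w i * (c j • w j))
          = (t.map (algebraMap F F')) i j * c j := by
        intro j
        rw [mul_smul_comm, map_smul, htr i j, smul_eq_mul, mul_comm]
        rfl
      rw [Finset.sum_congr rfl (fun j _ => h2 j)] at h0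
      simpa [Matrix.mulVec, dotProduct] using h0
    have hdet' : (t.map (algebraMap F F')).det ≠ 0 := by
      have hdm : (t.map (algebraMap F F')).det = algebraMap F F' t.det := by
        rw [← RingHom.mapMatrix_apply, ← RingHom.map_det]
      rw [hdm]
      intro h0
      exact hdet ((algebraMap F F').injective (by rw [h0, map_zero]))
    have hc0 : c = 0 := by
      by_contra hc0
      exact hdet' (Matrix.exists_mulVec_eq_zero_iff.mp ⟨c, hc0, hcv⟩)
    apply Subtype.ext
    rw [← hc, hc0]
    simp
  letI : Ring B := Subalgebra.toRing (R := F') (A := Module.End F' (F' ⊗[F] V)) B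
  haveI hBss : IsSemisimpleRing B := aux_ssRing_of_trace B hndF'
  haveI : IsSemisimpleModule B (F' ⊗[F] V) := IsSemisimpleRing.isSemisimpleModule
  -- lift W to a B-submodule
  have hWclosed : ∀ (f : Module.End F' (F' ⊗[F] V)), f ∈ B → ∀ x ∈ W, f x ∈ W := by
    intro f hf
    induction hf using Algebra.adjoin_induction with
    | mem x hx =>
      obtain ⟨g, rfl⟩ := hx
      exact fun x hx => hW g ⟨x, hx, rfl⟩
    | algebraMap r =>
      intro x hx
      rw [Module.algebraMap_end_apply]
      exact W.smul_mem r hx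
    | add x y hx hy ihx ihy =>
      intro x hx
      rw [LinearMap.add_apply]
      exact W.add_mem (ihx x hx) (ihy x hx)
    | mul x y hx hy ihx ihy =>
      intro x hx
      rw [Module.End.mul_apply]
      exact ihx _ (ihy x hx)
  set WB : Submodule B (F' ⊗[F] V) :=
    { carrier := W
      add_mem' := fun h1 h2 => W.add_mem h1 h2
      zero_mem' := W.zero_mem
      smul_mem' := fun b x hx => hWclosed (b : Module.End F' (F' ⊗[F] V)) b.2 x hx } with hWB
  obtain ⟨C, hC⟩ := exists_isCompl WB
  refine ⟨C.restrictScalars F', ?_, ?_, ?_⟩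
  · intro g
    rintro _ ⟨x, hx, rfl⟩
    exact C.smul_mem (⟨(ρ g).baseChange F', hgenB g⟩ : B) hx
  · rw [Submodule.disjoint_def]
    intro x hxW hxC
    exact (Submodule.disjoint_def.mp hC.disjoint) x hxW hxC
  · rw [codisjoint_iff, eq_top_iff]
    intro x _
    have hx : x ∈ WB ⊔ C := by rw [hC.sup_eq_top]; trivial
    obtain ⟨y, hy, z, hz, rfl⟩ := Submodule.mem_sup.mp hx
    exact Submodule.add_mem_sup (show y ∈ W from hy) (show z ∈ C.restrictScalars F' from hz)
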